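/- If an n-gon is strictly convex with vertices z_1, ..., z_n numbered counterclockwise around its boundary, then the vertices are arranged in a counterclockwise star formation about their centroid; in particular the centroid lies in the interior of the polygon. -/

import Mathlib

open Complex
open Fin.NatCast

private lemma crim (x y : ℂ) : ((starRingEnd ℂ) x * y).im = x.re * y.im - x.im * y.re := by
  simp [Complex.mul_im]; ring

private lemma cramer_contra (x y v w : ℂ)
    (hA : 0 < ((starRingEnd ℂ) v * y).im) (hB : 0 < ((starRingEnd ℂ) x * v).im)
    (hC : 0 < ((starRingEnd ℂ) v * w).im)
    (h1 : 0 < ((starRingEnd ℂ) (y - x) * (v - x)).im)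
    (hP : 0 < ((starRingEnd ℂ) (w - v) * (x - v)).im)
    (hQ : 0 < ((starRingEnd ℂ) (w - v) * (y - v)).im) : False := by
  simp only [crim, Complex.sub_re, Complex.sub_im] at hA hB hC h1 hP hQ
  nlinarith [mul_pos hA hP, mul_pos hB hQ, mul_pos h1 hC]

private lemma cr_polar (r₁ r₂ θ₁ θ₂ : ℝ) (v : ℂ) :
    ((starRingEnd ℂ) ((r₁:ℂ) * Complex.exp ((θ₁:ℂ) * Complex.I) * v) *
      ((r₂:ℂ) * Complex.exp ((θ₂:ℂ) * Complex.I) * v)).im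
      = r₁ * r₂ * Complex.normSq v * Real.sin (θ₂ - θ₁) := by
  simp [crim, Complex.mul_re, Complex.mul_im, Complex.exp_re, Complex.exp_im,
    Real.sin_sub, Complex.normSq_apply]
  ring

private lemma cramer (x y v : ℂ) (hD : ((starRingEnd ℂ) x * y).im ≠ 0) :
    v = ((((starRingEnd ℂ) v * y).im / ((starRingEnd ℂ) x * y).im : ℝ) : ℂ) * x
      + ((((starRingEnd ℂ) x * v).im / ((starRingEnd ℂ) x * y).im : ℝ) : ℂ) * y := by
  have key : ((((starRingEnd ℂ) x * y).im : ℝ) : ℂ) * v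
      = ((((starRingEnd ℂ) v * y).im : ℝ) : ℂ) * x + ((((starRingEnd ℂ) x * v).im : ℝ) : ℂ) * y := by
    apply Complex.ext <;>
      simp [crim, Complex.mul_re, Complex.mul_im, Complex.add_re, Complex.add_im] <;> ring
  have hDc : ((((starRingEnd ℂ) x * y).im : ℝ) : ℂ) ≠ 0 := by
    exact_mod_cast Complex.ofReal_ne_zero.mpr hD
  calc v = ((((starRingEnd ℂ) x * y).im : ℝ) : ℂ)⁻¹ * (((((starRingEnd ℂ) x * y).im : ℝ) : ℂ) * v) := by
            rw [← mul_assoc, inv_mul_cancel₀ hDc, one_mul]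
    _ = ((((starRingEnd ℂ) x * y).im : ℝ) : ℂ)⁻¹ * (((((starRingEnd ℂ) v * y).im : ℝ) : ℂ) * x
          + ((((starRingEnd ℂ) x * v).im : ℝ) : ℂ) * y) := by rw [key]
    _ = _ := by rw [Complex.ofReal_div, Complex.ofReal_div]; ring

private lemma polar_im (u w v0 : ℂ) (θu θw : ℝ) (h0 : v0 ≠ 0)
    (hu : u = ((norm u / norm v0 : ℝ):ℂ) * Complex.exp ((θu:ℂ) * Complex.I) * v0)
    (hw : w = ((norm w / norm v0 : ℝ):ℂ) * Complex.exp ((θw:ℂ) * Complex.I) * v0) :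
    ((starRingEnd ℂ) u * w).im = norm u * norm w * Real.sin (θw - θu) := by
  have h := cr_polar (norm u / norm v0) (norm w / norm v0) θu θw v0
  rw [← hu, ← hw] at h
  rw [h, Complex.normSq_eq_norm_sq]
  have h0' : norm v0 ≠ 0 := norm_ne_zero_iff.mpr h0
  field_simp

/-- The centroid of `n` points in the complex plane. -/
noncomputable def centroid (n : ℕ) (z : Fin n → ℂ) : ℂ := (∑ i, z i) / n

/-- The `n`-gon with distinct vertices `z 0, …, z (n-1)`, numbered counterclockwise,
is strictly convex: every vertex lies strictly to the left of every directed edge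
`z i → z (i+1)`. -/
def StrictlyConvexCCW (n : ℕ) [NeZero n] (z : Fin n → ℂ) : Prop :=
  (∀ i j : Fin n, i ≠ j → z i ≠ z j) ∧
  ∀ i j : Fin n, j ≠ i → j ≠ i + 1 →
    0 < ((starRingEnd ℂ) (z (i + 1) - z i) * (z j - z i)).im

/-- Counterclockwise star formation about the centroid. -/
noncomputable def StarFormation (n : ℕ) [NeZero n] (z : Fin n → ℂ) : Prop :=
  ∃ α : Fin n → ℝ,
    (∀ i, z i ≠ centroid n z) ∧ (∀ i, 0 < α i) ∧ (∑ i, α i) = 2 * Real.pi ∧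
    ∀ i, z (i + 1) - centroid n z =
      ((norm (z (i + 1) - centroid n z) / norm (z i - centroid n z) : ℝ) : ℂ) *
        Complex.exp ((α i : ℂ) * Complex.I) * (z i - centroid n z)

set_option maxHeartbeats 1600000

/-- If an `n`-gon is strictly convex with its vertices numbered counterclockwise, then
the vertices are in a counterclockwise star formation about their centroid; in particular
the centroid lies in the interior of the polygon (its convex hull). -/
theorem strictlyConvex_starFormation (n : ℕ) [NeZero n] (hn : 3 ≤ n)
    (z : Fin n → ℂ) (hconv : StrictlyConvexCCW n z) :
    StarFormation n z ∧
      centroid n z ∈ interior (convexHull ℝ (Set.range z)) := by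
  obtain ⟨hdist, hcv⟩ := hconv
  set c : ℂ := centroid n z with hc
  have hnc : (n:ℂ) ≠ 0 := Nat.cast_ne_zero.2 (NeZero.ne n)
  have hπ := Real.pi_pos
  -- Fin n basics
  have h1n : (1:ℕ) < n := by omega
  have hone : (1 : Fin n).val = 1 := by
    rw [Fin.val_one']; exact Nat.mod_eq_of_lt h1n
  have h10 : (1 : Fin n) ≠ 0 := by
    intro h; have := congrArg Fin.val h; rw [hone] at this; simp at this
  have h20 : (1 : Fin n) + 1 ≠ 0 := by
    intro h; have := congrArg Fin.val h
    rw [Fin.val_add, hone] at this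
    simp only [Fin.val_zero] at this
    rw [Nat.mod_eq_of_lt (by omega)] at this
    omega
  -- centroid strictly left of each edge
  have hcent : ∀ i : Fin n, 0 < ((starRingEnd ℂ) (z (i+1) - z i) * (c - z i)).im := by
    intro i
    have key : c - z i = ((n:ℂ))⁻¹ * ∑ j : Fin n, (z j - z i) := by
      have hsum : ∑ j : Fin n, (z j - z i) = (∑ j : Fin n, z j) - (n:ℂ) * z i := by
        rw [Finset.sum_sub_distrib, Finset.sum_const, Finset.card_univ, Fintype.card_fin,
          nsmul_eq_mul]
      rw [hsum, hc]
      show (∑ j : Fin n, z j) / (n:ℂ) - z i = _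
      field_simp
    rw [key]
    have expand : (starRingEnd ℂ) (z (i+1) - z i) * (((n:ℂ))⁻¹ * ∑ j : Fin n, (z j - z i))
        = (((n:ℝ)⁻¹ : ℝ) : ℂ) * ∑ j : Fin n, (starRingEnd ℂ) (z (i+1) - z i) * (z j - z i) := by
      calc (starRingEnd ℂ) (z (i+1) - z i) * (((n:ℂ))⁻¹ * ∑ j : Fin n, (z j - z i))
          = ((n:ℂ))⁻¹ * ((starRingEnd ℂ) (z (i+1) - z i) * ∑ j : Fin n, (z j - z i)) := by ring
        _ = ((n:ℂ))⁻¹ * ∑ j : Fin n, (starRingEnd ℂ) (z (i+1) - z i) * (z j - z i) := by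
            rw [Finset.mul_sum]
        _ = _ := by push_cast; ring
    rw [expand]
    have him : ((((n:ℝ)⁻¹ : ℝ) : ℂ) * ∑ j : Fin n, (starRingEnd ℂ) (z (i+1) - z i) * (z j - z i)).im
        = (n:ℝ)⁻¹ * ∑ j : Fin n, ((starRingEnd ℂ) (z (i+1) - z i) * (z j - z i)).im := by
      simp [Complex.mul_im, Complex.im_sum]
    rw [him]
    have hnn : (0:ℝ) < (n:ℝ)⁻¹ := by
      have : (0:ℝ) < n := by exact_mod_cast (by omega : 0 < n)
      positivity
    apply mul_pos hnn
    apply Finset.sum_pos'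
    · intro j _
      rcases eq_or_ne j i with rfl | hji
      · simp
      rcases eq_or_ne j (i+1) with rfl | hji1
      · have : ((starRingEnd ℂ) (z (i+1) - z i) * (z (i+1) - z i)).im = 0 := by
          rw [crim]; ring
        rw [this]
      · exact le_of_lt (hcv i j hji hji1)
    · refine ⟨i + 1 + 1, Finset.mem_univ _, ?_⟩
      have hne1 : i + 1 + 1 ≠ i := by
        intro h
        have : (1:Fin n) + 1 = 0 := by
          have := congrArg (fun x => x - i) h
          simpa [add_assoc, add_comm, add_left_comm, sub_eq_iff_eq_add] using this
        exact h20 this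
      have hne2 : i + 1 + 1 ≠ i + 1 := by
        intro h
        have : (1:Fin n) = 0 := by
          have := congrArg (fun x => x - (i+1)) h
          simpa using this
        exact h10 this
      exact hcv i (i+1+1) hne1 hne2
  have hne : ∀ i : Fin n, z i ≠ c := by
    intro i h
    have := hcent i
    rw [← h, sub_self, mul_zero] at this
    simp at this
  have hVfne : ∀ i : Fin n, z i - c ≠ 0 := fun i => sub_ne_zero.2 (hne i)
  -- cross of consecutive radii is positive
  have hcr : ∀ i : Fin n, 0 < ((starRingEnd ℂ) (z i - c) * (z (i+1) - c)).im := by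
    intro i
    have h := hcent i
    simp only [crim, Complex.sub_re, Complex.sub_im] at h ⊢
    nlinarith [h]
  -- the angles
  set α : Fin n → ℝ := fun i => Complex.arg ((z (i+1) - c) / (z i - c)) with hα
  have himq : ∀ i : Fin n, 0 < ((z (i+1) - c) / (z i - c)).im := by
    intro i
    have hw := hVfne i
    have hns : 0 < Complex.normSq (z i - c) := Complex.normSq_pos.2 hw
    have h1 : (starRingEnd ℂ) (z i - c) * (z (i+1) - c)
        = ((z (i+1) - c)/(z i - c)) * ((Complex.normSq (z i - c) : ℝ) : ℂ) := by
      rw [Complex.normSq_eq_conj_mul_self]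
      field_simp
    have h2 := hcr i
    rw [h1] at h2
    have h3 : (((z (i+1) - c)/(z i - c)) * ((Complex.normSq (z i - c) : ℝ) : ℂ)).im
        = ((z (i+1) - c)/(z i - c)).im * Complex.normSq (z i - c) := by
      simp [Complex.mul_im]
    rw [h3] at h2
    nlinarith
  have hαpos : ∀ i, 0 < α i := by
    intro i
    rcases lt_or_eq_of_le (Complex.arg_nonneg_iff.2 (le_of_lt (himq i))) with h | h
    · exact h
    · exfalso
      have := Complex.arg_eq_zero_iff.1 h.symm
      linarith [himq i, this.2]
  have hαlt : ∀ i, α i < Real.pi := by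
    intro i
    rcases lt_or_eq_of_le (Complex.arg_le_pi ((z (i+1) - c) / (z i - c))) with h | h
    · exact h
    · exfalso
      have := Complex.arg_eq_pi_iff.1 h
      linarith [himq i, this.2]
  have hpolar : ∀ i : Fin n, z (i+1) - c
      = ((norm (z (i+1) - c) / norm (z i - c) : ℝ) : ℂ)
        * Complex.exp ((α i : ℂ) * Complex.I) * (z i - c) := by
    intro i
    have habs := Complex.norm_mul_exp_arg_mul_I ((z (i+1) - c) / (z i - c))
    calc z (i+1) - c = ((z (i+1) - c)/(z i - c)) * (z i - c) := by
          rw [div_mul_cancel₀ _ (hVfne i)]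
      _ = ((norm ((z (i+1) - c)/(z i - c)) : ℝ) : ℂ)
            * Complex.exp ((α i : ℂ) * Complex.I) * (z i - c) := by rw [habs]
      _ = _ := by rw [norm_div]
  -- ℕ-indexed vectors and partial angle sums
  set V : ℕ → ℂ := fun j => z ((j : ℕ) : Fin n) - c with hV
  set b : ℕ → ℝ := fun j => ∑ i ∈ Finset.range j, α ((i : ℕ) : Fin n) with hb
  have hVne : ∀ j : ℕ, V j ≠ 0 := fun j => hVfne _
  have hb0 : b 0 = 0 := by simp [hb]
  have hstep : ∀ j : ℕ, b (j+1) = b j + α ((j:ℕ) : Fin n) := fun j => Finset.sum_range_succ _ j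
  have hmono : StrictMono b := strictMono_nat_of_lt_succ fun j => by
    rw [hstep]; linarith [hαpos ((j:ℕ):Fin n)]
  have hstepπ : ∀ j : ℕ, b (j+1) < b j + Real.pi := fun j => by
    rw [hstep]; linarith [hαlt ((j:ℕ):Fin n)]
  have hcast : ∀ j : ℕ, ((j+1 : ℕ) : Fin n) = ((j:ℕ) : Fin n) + 1 := by
    intro j; push_cast; ring
  have hrep : ∀ j : ℕ, V j = ((norm (V j) / norm (V 0) : ℝ) : ℂ)
      * Complex.exp ((b j : ℂ) * Complex.I) * V 0 := by
    intro j
    induction j with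
    | zero =>
      rw [hb0]
      rw [div_self (norm_ne_zero_iff.mpr (hVne 0))]
      push_cast
      simp
    | succ j ih =>
      have h1 : V (j+1) = z (((j:ℕ):Fin n) + 1) - c := by
        rw [hV]; simp only; rw [hcast j]
      have h2 : norm (z (((j:ℕ):Fin n) + 1) - c) = norm (V (j+1)) := by
        rw [h1]
      conv_lhs => rw [h1, hpolar ((j:ℕ):Fin n)]
      have h3 : z ((j:ℕ):Fin n) - c = V j := rfl
      rw [h3, h2, hstep j]
      conv_lhs => arg 2; rw [ih]
      rw [Complex.ofReal_add, add_mul, Complex.exp_add]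
      have ha0 : norm (V 0) ≠ 0 := norm_ne_zero_iff.mpr (hVne 0)
      have haj : norm (V j) ≠ 0 := norm_ne_zero_iff.mpr (hVne j)
      rw [Complex.ofReal_div, Complex.ofReal_div, Complex.ofReal_div]
      have ha0c : (norm (V 0) : ℂ) ≠ 0 := by exact_mod_cast ha0
      have hajc : (norm (V j) : ℂ) ≠ 0 := by exact_mod_cast haj
      field_simp

  have habs0 : norm (V 0) ≠ 0 := norm_ne_zero_iff.mpr (hVne 0)
  have hsin : ∀ s t : ℕ, ((starRingEnd ℂ) (V s) * V t).im
      = norm (V s) * norm (V t) * Real.sin (b t - b s) :=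
    fun s t => polar_im (V s) (V t) (V 0) (b s) (b t) (hVne 0) (hrep s) (hrep t)
  have hray0 : ∀ i j : Fin n, i ≠ j → ∀ s : ℝ, 0 < s → s < 1 → z j - c ≠ (s:ℂ) * (z i - c) := by
    intro i j hij s hs hs1 heq
    have hs1' : (1:ℝ) - s ≠ 0 := by linarith
    have h2 : c - z j = (((-s)/(1-s) : ℝ) : ℂ) * (z i - z j) := by
      have hzi : z i - z j = (((1 - s : ℝ)) : ℂ) * (z i - c) := by
        push_cast
        linear_combination -heq
      rw [hzi, ← mul_assoc, ← Complex.ofReal_mul, div_mul_cancel₀ _ hs1']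
      push_cast
      linear_combination -heq
    have h3 : 0 ≤ ((starRingEnd ℂ) (z (j+1) - z j) * (z i - z j)).im := by
      rcases eq_or_ne i (j+1) with rfl | hne1
      · have hz : ((starRingEnd ℂ) (z (j+1) - z j) * (z (j+1) - z j)).im = 0 := by
          rw [crim]; ring
        rw [hz]
      · exact le_of_lt (hcv j i hij hne1)
    have h4 := hcent j
    rw [h2] at h4
    have h5 : ((starRingEnd ℂ) (z (j+1) - z j) * ((((-s)/(1-s) : ℝ) : ℂ) * (z i - z j))).im
        = ((-s)/(1-s)) * ((starRingEnd ℂ) (z (j+1) - z j) * (z i - z j)).im := by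
      rw [show (starRingEnd ℂ) (z (j+1) - z j) * ((((-s)/(1-s) : ℝ) : ℂ) * (z i - z j))
          = (((-s)/(1-s) : ℝ) : ℂ) * ((starRingEnd ℂ) (z (j+1) - z j) * (z i - z j)) from by ring]
      rw [Complex.mul_im, Complex.ofReal_re, Complex.ofReal_im]
      ring
    rw [h5] at h4
    have hcoef : (-s)/(1-s) < 0 := div_neg_of_neg_of_pos (by linarith) (by linarith)
    nlinarith
  have hray : ∀ i j : Fin n, i ≠ j → ∀ s : ℝ, 0 < s → z j - c ≠ (s:ℂ) * (z i - c) := by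
    intro i j hij s hs heq
    rcases lt_trichotomy s 1 with h | h | h
    · exact hray0 i j hij s hs h heq
    · rw [h] at heq
      push_cast at heq
      have : z j = z i := by linear_combination heq
      exact hdist j i (Ne.symm hij) this
    · have hsne : (s:ℂ) ≠ 0 := Complex.ofReal_ne_zero.2 (ne_of_gt hs)
      refine hray0 j i (Ne.symm hij) s⁻¹ (by positivity) (inv_lt_one_of_one_lt₀ h) ?_
      rw [heq]
      push_cast
      field_simp
  have hlt2pi : ∀ j : ℕ, j < n → b j < 2*Real.pi := by
    intro j₀ hj₀
    by_contra hcon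
    push_neg at hcon
    have hex : ∃ t, 2*Real.pi ≤ b t ∧ t < n := ⟨j₀, hcon, hj₀⟩
    obtain ⟨t, ⟨htb, htn⟩, hminp⟩ : ∃ t, (2*Real.pi ≤ b t ∧ t < n)
        ∧ ∀ s, s < t → ¬(2*Real.pi ≤ b s ∧ s < n) :=
      ⟨Nat.find hex, Nat.find_spec hex, fun s hs => Nat.find_min hex hs⟩
    have hmin : ∀ s, s < t → b s < 2*Real.pi := by
      intro s hst
      by_contra hcon2
      push_neg at hcon2
      exact hminp s hst ⟨hcon2, lt_trans hst htn⟩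
    have hb1 : b 1 = α ((0:ℕ):Fin n) := by rw [hstep 0, hb0]; ring
    have ht3 : 3 ≤ t := by
      by_contra hcon2
      push_neg at hcon2
      have h0 : b t < 2*Real.pi := by
        have e : t = 0 ∨ t = 1 ∨ t = 2 := by omega
        rcases e with rfl | rfl | rfl
        · rw [hb0]; linarith
        · rw [hb1]; linarith [hαlt ((0:ℕ):Fin n)]
        · rw [hstep 1, hb1]; linarith [hαlt ((0:ℕ):Fin n), hαlt ((1:ℕ):Fin n)]
      linarith
    have hvt : ((t:ℕ) : Fin n).val = t := Fin.val_cast_of_lt htn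
    have hvt1 : ((t-1:ℕ) : Fin n).val = t-1 := Fin.val_cast_of_lt (by omega)
    have hne01 : (0:Fin n) ≠ ((t-1:ℕ):Fin n) := by
      intro h; have := congrArg Fin.val h; rw [hvt1] at this; simp at this; omega
    have hne0t : (0:Fin n) ≠ ((t:ℕ):Fin n) := by
      intro h; have := congrArg Fin.val h; rw [hvt] at this; simp at this; omega
    have hne_t1_1 : ((t-1:ℕ):Fin n) ≠ (0:Fin n) + 1 := by
      rw [zero_add]
      intro h; have := congrArg Fin.val h; rw [hvt1, hone] at this; omega
    have hne_t_1 : ((t:ℕ):Fin n) ≠ (0:Fin n) + 1 := by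
      rw [zero_add]
      intro h; have := congrArg Fin.val h; rw [hvt, hone] at this; omega
    have hcast' : ((t-1:ℕ) : Fin n) + 1 = ((t:ℕ) : Fin n) := by
      rw [← hcast (t-1)]
      congr 1
      omega
    have hbtlt : b t < b (t-1) + Real.pi := by
      have h := hstepπ (t-1)
      rwa [show t-1+1 = t from by omega] at h
    have hbt1lt : b (t-1) < 2*Real.pi := hmin (t-1) (by omega)
    have hne2 : b t ≠ 2*Real.pi := by
      intro hbt
      have h := hrep t
      rw [hbt] at h
      have hexp : Complex.exp (((2*Real.pi : ℝ):ℂ) * Complex.I) = 1 := by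
        push_cast
        exact Complex.exp_two_pi_mul_I
      rw [hexp, mul_one] at h
      refine hray 0 ((t:ℕ):Fin n) hne0t (norm (V t)/norm (V 0))
        (div_pos (norm_pos_iff.mpr (hVne t)) (norm_pos_iff.mpr (hVne 0))) ?_
      have h0 : z (0:Fin n) - c = V 0 := by simp only [hV, Nat.cast_zero]
      rw [h0]
      exact h
    have hgt : 2*Real.pi < b t := lt_of_le_of_ne htb (Ne.symm hne2)
    have hA : 0 < ((starRingEnd ℂ) (V 0) * V t).im := by
      rw [hsin 0 t, hb0, sub_zero]
      have hspos : 0 < Real.sin (b t) := by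
        have h1 := Real.sin_sub_two_pi (b t)
        have h2 := Real.sin_pos_of_pos_of_lt_pi (x := b t - 2*Real.pi) (by linarith) (by linarith)
        linarith
      exact mul_pos (mul_pos (norm_pos_iff.mpr (hVne 0)) (norm_pos_iff.mpr (hVne t))) hspos
    have hB : 0 < ((starRingEnd ℂ) (V (t-1)) * V 0).im := by
      rw [hsin (t-1) 0, hb0, zero_sub, Real.sin_neg]
      have hgtπ : Real.pi < b (t-1) := by linarith
      have hsneg : Real.sin (b (t-1)) < 0 := by
        have h1 := Real.sin_sub_pi (b (t-1))
        have h2 := Real.sin_pos_of_pos_of_lt_pi (x := b (t-1) - Real.pi) (by linarith) (by linarith)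
        linarith
      exact mul_pos (mul_pos (norm_pos_iff.mpr (hVne (t-1))) (norm_pos_iff.mpr (hVne 0)))
        (by linarith)
    have hC : 0 < ((starRingEnd ℂ) (V 0) * V 1).im := by
      rw [hsin 0 1, hb0, sub_zero, hb1]
      exact mul_pos (mul_pos (norm_pos_iff.mpr (hVne 0)) (norm_pos_iff.mpr (hVne 1)))
        (Real.sin_pos_of_pos_of_lt_pi (hαpos _) (hαlt _))
    have hE1 : V t - V (t-1) = z ((t:ℕ):Fin n) - z ((t-1:ℕ):Fin n) := by
      simp only [hV]; ring
    have hE2 : V 0 - V (t-1) = z (0:Fin n) - z ((t-1:ℕ):Fin n) := by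
      simp only [hV, Nat.cast_zero]; ring
    have hE3 : V 1 - V 0 = z (1:Fin n) - z (0:Fin n) := by
      simp only [hV, Nat.cast_zero, Nat.cast_one]; ring
    have hE4 : V (t-1) - V 0 = z ((t-1:ℕ):Fin n) - z (0:Fin n) := by
      simp only [hV, Nat.cast_zero]; ring
    have hE5 : V t - V 0 = z ((t:ℕ):Fin n) - z (0:Fin n) := by
      simp only [hV, Nat.cast_zero]; ring
    have h1main := hcv ((t-1:ℕ):Fin n) 0 hne01 (by rw [hcast']; exact hne0t)
    rw [hcast'] at h1main
    have h1' : 0 < ((starRingEnd ℂ) (V t - V (t-1)) * (V 0 - V (t-1))).im := by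
      rw [hE1, hE2]; exact h1main
    have hPm := hcv 0 ((t-1:ℕ):Fin n) (Ne.symm hne01) hne_t1_1
    rw [zero_add] at hPm
    have hP' : 0 < ((starRingEnd ℂ) (V 1 - V 0) * (V (t-1) - V 0)).im := by
      rw [hE3, hE4]; exact hPm
    have hQm := hcv 0 ((t:ℕ):Fin n) (Ne.symm hne0t) hne_t_1
    rw [zero_add] at hQm
    have hQ' : 0 < ((starRingEnd ℂ) (V 1 - V 0) * (V t - V 0)).im := by
      rw [hE3, hE5]; exact hQm
    exact cramer_contra (V (t-1)) (V t) (V 0) (V 1) hA hB hC h1' hP' hQ'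
  have hsum : b n = 2*Real.pi := by
    have h1 : V n = V 0 := by simp only [hV, Fin.natCast_self, Nat.cast_zero]
    have h2 := hrep n
    rw [h1, div_self habs0] at h2
    push_cast at h2
    have h3 : Complex.exp ((b n : ℂ) * Complex.I) = 1 := by
      have h4 : (1:ℂ) * V 0 = Complex.exp ((b n : ℂ) * Complex.I) * V 0 := by
        linear_combination h2
      have := mul_right_cancel₀ (hVne 0) h4
      exact this.symm
    obtain ⟨k, hk⟩ := Complex.exp_eq_one_iff.1 h3
    have h4 : (b n : ℂ) = (k:ℂ) * (2*(Real.pi:ℂ)) := by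
      have hI : (Complex.I) ≠ 0 := Complex.I_ne_zero
      apply mul_right_cancel₀ hI
      rw [hk]; ring
    have h5 : b n = (k:ℝ) * (2*Real.pi) := by exact_mod_cast h4
    have hpos : 0 < b n := by
      have := hmono (show 0 < n by omega)
      rwa [hb0] at this
    have hlt : b n < 3*Real.pi := by
      have h6 := hstepπ (n-1)
      rw [show n-1+1 = n from by omega] at h6
      have h7 := hlt2pi (n-1) (by omega)
      linarith [hαlt (((n-1:ℕ)):Fin n)]
    have hk1 : (0:ℝ) < (k:ℝ) := by nlinarith
    have hk2 : (k:ℝ) < 2 := by nlinarith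
    have hk3 : (0:ℤ) < k := by exact_mod_cast hk1
    have hk4 : k < 2 := by exact_mod_cast hk2
    have : k = 1 := by omega
    rw [h5, this]
    push_cast
    ring
  have hsumfin : (∑ i : Fin n, α i) = 2 * Real.pi := by
    have h := Fin.sum_univ_eq_sum_range (fun i : ℕ => α ((i:ℕ):Fin n)) n
    simp only [Fin.cast_val_eq_self] at h
    have h2 : (∑ i ∈ Finset.range n, α ((i:ℕ):Fin n)) = b n := rfl
    rw [h2] at h
    rw [← hsum, ← h]
  have hstar : StarFormation n z := by
    refine ⟨α, ?_, hαpos, hsumfin, ?_⟩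
    · intro i; rw [← hc]; exact hne i
    · intro i; rw [← hc]; exact hpolar i
  refine ⟨hstar, ?_⟩
  have hccm : c ∈ convexHull ℝ (Set.range z) := by
    have hcm : (Finset.univ : Finset (Fin n)).centerMass (fun _ => (1:ℝ)) z = c := by
      rw [Finset.centerMass]
      simp only [Finset.sum_const, Finset.card_univ, Fintype.card_fin, nsmul_eq_mul, mul_one,
        one_smul]
      rw [hc]
      show _ = (∑ i, z i) / (n:ℂ)
      rw [Complex.real_smul]
      push_cast
      rw [inv_mul_eq_div]
    rw [← hcm]
    refine Finset.centerMass_mem_convexHull _ (fun i _ => zero_le_one) ?_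
      (fun i _ => Set.mem_range_self i)
    simp only [Finset.sum_const, Finset.card_univ, Fintype.card_fin, nsmul_eq_mul, mul_one]
    exact_mod_cast (by omega : 0 < n)
  have hDpos : ∀ j : ℕ, 0 < ((starRingEnd ℂ) (V j) * V (j+1)).im := by
    intro j
    have h := hcr ((j:ℕ):Fin n)
    rw [← hcast j] at h
    simpa only [hV] using h
  have hrangene : (Finset.range n).Nonempty := ⟨0, Finset.mem_range.2 (by omega)⟩
  set ε : ℝ := (Finset.range n).inf' hrangene
      (fun j => ((starRingEnd ℂ) (V j) * V (j+1)).im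
        / (norm (V j) + norm (V (j+1)) + 1)) with hε
  have hεpos : 0 < ε := by
    rw [hε, Finset.lt_inf'_iff]
    intro j _
    exact div_pos (hDpos j) (by positivity)
  have hball : Metric.ball c ε ⊆ convexHull ℝ (Set.range z) := by
    intro x hx
    rcases eq_or_ne x c with rfl | hxc
    · exact hccm
    have hdne : x - c ≠ 0 := sub_ne_zero.2 hxc
    have hdlt : norm (x - c) < ε := by
      rw [Metric.mem_ball, Complex.dist_eq] at hx
      exact hx
    set q : ℂ := (x - c) / V 0 with hq
    have hqne : q ≠ 0 := div_ne_zero hdne (hVne 0)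
    set φ : ℝ := if 0 ≤ q.arg then q.arg else q.arg + 2*Real.pi with hφ
    have hφ0 : 0 ≤ φ := by
      rw [hφ]; split_ifs with h
      · exact h
      · linarith [Complex.neg_pi_lt_arg q]
    have hφlt : φ < 2*Real.pi := by
      rw [hφ]; split_ifs with h
      · linarith [Complex.arg_le_pi q]
      · push_neg at h; linarith
    have hdrep : x - c = ((norm (x - c) / norm (V 0) : ℝ):ℂ)
        * Complex.exp ((φ:ℂ) * Complex.I) * V 0 := by
      have h1 : Complex.exp ((φ:ℂ) * Complex.I) = Complex.exp ((q.arg:ℂ) * Complex.I) := by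
        rw [hφ]
        split_ifs with h
        · rfl
        · push_cast
          rw [add_mul, Complex.exp_add, Complex.exp_two_pi_mul_I, mul_one]
      rw [h1]
      have h2 := Complex.norm_mul_exp_arg_mul_I q
      calc x - c = q * V 0 := (div_mul_cancel₀ _ (hVne 0)).symm
        _ = ((norm q : ℝ):ℂ) * Complex.exp ((q.arg:ℂ) * Complex.I) * V 0 := by rw [h2]
        _ = _ := by rw [hq, norm_div]
    obtain ⟨m, hmspec, hminp⟩ : ∃ m, (φ < b m) ∧ ∀ s, s < m → ¬(φ < b s) := by
      have hex2 : ∃ m, φ < b m := ⟨n, by rw [hsum]; exact hφlt⟩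
      exact ⟨Nat.find hex2, Nat.find_spec hex2, fun s hs => Nat.find_min hex2 hs⟩
    have hm1 : 1 ≤ m := by
      rcases Nat.eq_zero_or_pos m with h | h
      · rw [h, hb0] at hmspec; linarith
      · exact h
    have hmn : m ≤ n := by
      by_contra h
      push_neg at h
      exact hminp n h (by rw [hsum]; exact hφlt)
    have hjn : m - 1 < n := by omega
    have hjm : m - 1 + 1 = m := by omega
    have hbjle : b (m-1) ≤ φ := by
      by_contra h
      push_neg at h
      exact hminp (m-1) (by omega) h
    have hup : φ < b (m-1+1) := by rw [hjm]; exact hmspec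
    have hstep' : b (m-1+1) = b (m-1) + α (((m-1:ℕ)):Fin n) := hstep (m-1)
    have habsd : 0 < norm (x - c) := norm_pos_iff.mpr hdne
    have hAval : ((starRingEnd ℂ) (x - c) * V (m-1+1)).im
        = norm (x - c) * norm (V (m-1+1)) * Real.sin (b (m-1+1) - φ) :=
      polar_im (x - c) (V (m-1+1)) (V 0) φ (b (m-1+1)) (hVne 0) hdrep (hrep (m-1+1))
    have hBval : ((starRingEnd ℂ) (V (m-1)) * (x - c)).im
        = norm (V (m-1)) * norm (x - c) * Real.sin (φ - b (m-1)) :=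
      polar_im (V (m-1)) (x - c) (V 0) (b (m-1)) φ (hVne 0) (hrep (m-1)) hdrep
    have hs1a : 0 < b (m-1+1) - φ := by linarith
    have hs1b : b (m-1+1) - φ < Real.pi := by
      rw [hstep']; linarith [hαlt (((m-1:ℕ)):Fin n)]
    have hs2a : 0 ≤ φ - b (m-1) := by linarith
    have hs2b : φ - b (m-1) < Real.pi := by
      rw [hstep'] at hup; linarith [hαlt (((m-1:ℕ)):Fin n)]
    have hApos : 0 < ((starRingEnd ℂ) (x - c) * V (m-1+1)).im := by
      rw [hAval]
      exact mul_pos (mul_pos habsd (norm_pos_iff.mpr (hVne _)))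
        (Real.sin_pos_of_pos_of_lt_pi hs1a hs1b)
    have hBnonneg : 0 ≤ ((starRingEnd ℂ) (V (m-1)) * (x - c)).im := by
      rw [hBval]
      exact mul_nonneg (mul_nonneg (norm_nonneg _) (norm_nonneg _))
        (Real.sin_nonneg_of_nonneg_of_le_pi hs2a (le_of_lt hs2b))
    have hDj := hDpos (m-1)
    have hεle : ε ≤ ((starRingEnd ℂ) (V (m-1)) * V (m-1+1)).im
        / (norm (V (m-1)) + norm (V (m-1+1)) + 1) :=
      Finset.inf'_le _ (Finset.mem_range.2 hjn)
    have hub : ((starRingEnd ℂ) (x - c) * V (m-1+1)).im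
          + ((starRingEnd ℂ) (V (m-1)) * (x - c)).im
        < ((starRingEnd ℂ) (V (m-1)) * V (m-1+1)).im := by
      have hA1 : ((starRingEnd ℂ) (x - c) * V (m-1+1)).im
          ≤ norm (x - c) * norm (V (m-1+1)) := by
        rw [hAval]
        nlinarith [Real.sin_le_one (b (m-1+1) - φ),
          mul_nonneg (norm_nonneg (x - c)) (norm_nonneg (V (m-1+1)))]
      have hB1 : ((starRingEnd ℂ) (V (m-1)) * (x - c)).im
          ≤ norm (V (m-1)) * norm (x - c) := by
        rw [hBval]
        nlinarith [Real.sin_le_one (φ - b (m-1)),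
          mul_nonneg (norm_nonneg (V (m-1))) (norm_nonneg (x - c))]
      have hsumabs : norm (x - c) * (norm (V (m-1)) + norm (V (m-1+1)) + 1)
          < ((starRingEnd ℂ) (V (m-1)) * V (m-1+1)).im := by
        have hpos' : 0 < norm (V (m-1)) + norm (V (m-1+1)) + 1 := by positivity
        have h := mul_lt_mul_of_pos_right (lt_of_lt_of_le hdlt hεle) hpos'
        rwa [div_mul_cancel₀ _ (ne_of_gt hpos')] at h
      nlinarith [habsd]
    have hdec := cramer (V (m-1)) (V (m-1+1)) (x - c) (ne_of_gt hDj)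
    set Acf : ℝ := ((starRingEnd ℂ) (x - c) * V (m-1+1)).im with hAcf
    set Bcf : ℝ := ((starRingEnd ℂ) (V (m-1)) * (x - c)).im with hBcf
    set Dcf : ℝ := ((starRingEnd ℂ) (V (m-1)) * V (m-1+1)).im with hDcf
    have hcoef1 : Acf/Dcf + Bcf/Dcf < 1 := by
      rw [← add_div, div_lt_one hDj]
      exact hub
    have hCS : Convex ℝ (convexHull ℝ (Set.range z)) := convex_convexHull ℝ _
    have key : x = ∑ i : Fin 3, (![1 - Acf/Dcf - Bcf/Dcf, Acf/Dcf, Bcf/Dcf] i) •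
        (![c, z ((m-1:ℕ):Fin n), z ((m-1+1:ℕ):Fin n)] i) := by
      rw [Fin.sum_univ_three]
      simp only [Matrix.cons_val_zero, Matrix.cons_val_one, Matrix.head_cons,
        Matrix.cons_val_two, Matrix.tail_cons]
      simp only [Complex.real_smul]
      have hVm : z ((m-1:ℕ):Fin n) = V (m-1) + c := by simp only [hV]; ring
      have hVm1 : z ((m-1+1:ℕ):Fin n) = V (m-1+1) + c := by simp only [hV]; ring
      rw [hVm, hVm1]
      push_cast at hdec ⊢
      linear_combination hdec
    rw [key]
    refine hCS.sum_mem ?_ ?_ ?_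
    · intro i _
      fin_cases i
      · show (0:ℝ) ≤ 1 - Acf/Dcf - Bcf/Dcf
        have h1 : 0 ≤ Acf/Dcf := div_nonneg (le_of_lt hApos) (le_of_lt hDj)
        have h2 : 0 ≤ Bcf/Dcf := div_nonneg hBnonneg (le_of_lt hDj)
        linarith
      · show (0:ℝ) ≤ Acf/Dcf
        exact div_nonneg (le_of_lt hApos) (le_of_lt hDj)
      · show (0:ℝ) ≤ Bcf/Dcf
        exact div_nonneg hBnonneg (le_of_lt hDj)
    · rw [Fin.sum_univ_three]
      simp only [Matrix.cons_val_zero, Matrix.cons_val_one, Matrix.head_cons,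
        Matrix.cons_val_two, Matrix.tail_cons]
      ring
    · intro i _
      fin_cases i
      · show c ∈ convexHull ℝ (Set.range z)
        exact hccm
      · show z ((m-1:ℕ):Fin n) ∈ convexHull ℝ (Set.range z)
        exact subset_convexHull ℝ _ (Set.mem_range_self _)
      · show z ((m-1+1:ℕ):Fin n) ∈ convexHull ℝ (Set.range z)
        exact subset_convexHull ℝ _ (Set.mem_range_self _)
  exact mem_interior.2 ⟨Metric.ball c ε, hball, Metric.isOpen_ball, Metric.mem_ball_self hεpos⟩
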